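/- With β := φ''(2)/φ''(1), as α → ∞ the root λ = (√(1+4β) - 1 - 2β)/(2β) of the characteristic equation satisfies λ = -β + 2β² + O(β³); combined with β = -e^{-α} + O(e^{-2α}) this gives λ = e^{-α} - 4e^{-2α} + O(e^{-3α}). -/

import Mathlib

/-- Equilibrium distance parameter of the Morse potential. -/
noncomputable def morseR0 (α : ℝ) : ℝ :=
  1 + (1 / α) * Real.log ((1 + 2 * Real.exp (-α)) / (1 + 2 * Real.exp (-2 * α)))

/-- The (shifted) Morse potential with stiffness α and shift φ₀. -/
noncomputable def morse (α φ₀ : ℝ) (r : ℝ) : ℝ :=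
  Real.exp (-2 * α * (r - morseR0 α)) - 2 * Real.exp (-α * (r - morseR0 α)) - φ₀

lemma morse_deriv (α φ₀ : ℝ) :
    deriv (morse α φ₀) = fun r => Real.exp (-2*α*(r - morseR0 α)) * (-2*α)
      - 2 * (Real.exp (-α*(r - morseR0 α)) * (-α)) := by
  funext y
  have h1 : HasDerivAt (fun r : ℝ => -2*α*(r - morseR0 α)) (-2*α) y := by
    simpa using ((hasDerivAt_id y).sub_const (morseR0 α)).const_mul (-2*α)
  have h2 : HasDerivAt (fun r : ℝ => -α*(r - morseR0 α)) (-α) y := by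
    simpa using ((hasDerivAt_id y).sub_const (morseR0 α)).const_mul (-α)
  have H : HasDerivAt (morse α φ₀)
      (Real.exp (-2*α*(y - morseR0 α)) * (-2*α)
        - 2 * (Real.exp (-α*(y - morseR0 α)) * (-α))) y :=
    (h1.exp.sub (h2.exp.const_mul 2)).sub_const φ₀
  exact H.deriv

lemma morse_deriv2 (α φ₀ r : ℝ) :
    deriv (deriv (morse α φ₀)) r
      = 4*α^2*Real.exp (-2*α*(r - morseR0 α)) - 2*α^2*Real.exp (-α*(r - morseR0 α)) := by
  rw [morse_deriv]
  have h1 : HasDerivAt (fun y : ℝ => -2*α*(y - morseR0 α)) (-2*α) r := by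
    simpa using ((hasDerivAt_id r).sub_const (morseR0 α)).const_mul (-2*α)
  have h2 : HasDerivAt (fun y : ℝ => -α*(y - morseR0 α)) (-α) r := by
    simpa using ((hasDerivAt_id r).sub_const (morseR0 α)).const_mul (-α)
  have H : HasDerivAt (fun y => Real.exp (-2*α*(y - morseR0 α)) * (-2*α)
      - 2 * (Real.exp (-α*(y - morseR0 α)) * (-α)))
      (Real.exp (-2*α*(r - morseR0 α)) * (-2*α) * (-2*α)
        - 2*(Real.exp (-α*(r - morseR0 α)) * (-α) * (-α))) r :=
    (h1.exp.mul_const (-2*α)).sub ((h2.exp.mul_const (-α)).const_mul 2)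
  rw [H.deriv]; ring

lemma exp_val (α : ℝ) (hα : α ≠ 0) (r : ℝ) :
    Real.exp (-α*(r - morseR0 α))
      = Real.exp (-α*(r-1)) * ((1 + 2*Real.exp (-α))/(1 + 2*Real.exp (-2*α))) := by
  have hQpos : 0 < (1 + 2*Real.exp (-α))/(1 + 2*Real.exp (-2*α)) := by positivity
  rw [morseR0, show -α*(r - (1 + 1/α * Real.log ((1 + 2 * Real.exp (-α)) / (1 + 2 * Real.exp (-2 * α)))))
      = -α*(r-1) + Real.log ((1 + 2*Real.exp (-α))/(1 + 2*Real.exp (-2*α))) from by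
        field_simp; ring]
  rw [Real.exp_add, Real.exp_log hQpos]

lemma sqrt_est (b : ℝ) (hb0 : b < 0) (hb : -(1/8) ≤ b) :
    |(Real.sqrt (1+4*b) - 1 - 2*b)/(2*b) - (-b + 2*b^2)| ≤ 23 * |b|^3 := by
  have h14 : (0:ℝ) ≤ 1+4*b := by linarith
  set s := Real.sqrt (1+4*b) with hsdef
  have hs2 : s^2 = 1+4*b := Real.sq_sqrt h14
  have hs0 : 0 ≤ s := Real.sqrt_nonneg _
  have hs7 : (7:ℝ)/10 ≤ s := by nlinarith [hs2, hs0]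
  have hden1 : (1:ℝ) ≤ s+1+2*b := by linarith
  have h2b : (2*b) ≠ 0 := by intro h; nlinarith
  have h1 : (s - 1 - 2*b)/(2*b) * (s+1+2*b) = -2*b := by
    rw [div_mul_eq_mul_div, div_eq_iff h2b]
    linear_combination hs2
  set lam := (s - 1 - 2*b)/(2*b) with hlam
  set M := (1-2*b)*s + 1 + 4*b^2 with hM
  have hM1 : (1:ℝ) ≤ M := by nlinarith
  have h2 : (lam - (-b + 2*b^2)) * (s+1+2*b) = b*((1-2*b)*s - (1+4*b^2)) := by
    linear_combination h1
  have h3 : ((1-2*b)*s - (1+4*b^2)) * M = -20*b^2+16*b^3-16*b^4 := by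
    linear_combination (1-2*b)^2 * hs2
  have h4 : (lam - (-b + 2*b^2)) * ((s+1+2*b)*M)
      = b*(-20*b^2+16*b^3-16*b^4) := by
    linear_combination M*h2 + b*h3
  have hd : (1:ℝ) ≤ (s+1+2*b)*M := by nlinarith
  have hE : |lam - (-b+2*b^2)| ≤ |b*(-20*b^2+16*b^3-16*b^4)| := by
    calc |lam - (-b+2*b^2)| = |lam - (-b+2*b^2)| * 1 := by ring
    _ ≤ |lam - (-b+2*b^2)| * ((s+1+2*b)*M) :=
        mul_le_mul_of_nonneg_left hd (abs_nonneg _)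
    _ = |(lam - (-b+2*b^2)) * ((s+1+2*b)*M)| := by
        rw [abs_mul, abs_of_nonneg (le_trans zero_le_one hd)]
    _ = _ := by rw [h4]
  refine hE.trans ?_
  have hP : |(-20*b^2+16*b^3-16*b^4)| ≤ 23*b^2 := by
    rw [abs_le]
    constructor <;> nlinarith [sq_nonneg b, sq_nonneg (b*b)]
  rw [abs_mul]
  calc |b| * |(-20*b^2+16*b^3-16*b^4)| ≤ |b| * (23*b^2) :=
        mul_le_mul_of_nonneg_left hP (abs_nonneg b)
  _ = 23 * |b|^3 := by rw [← sq_abs b]; ring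

lemma est_all (x : ℝ) (h0 : 0 < x) (h1 : x ≤ 1/8) :
    |(Real.sqrt (1 + 4 * (x*(2*x^2+2*x-1)/(1+4*x-2*x^2))) - 1
        - 2 * (x*(2*x^2+2*x-1)/(1+4*x-2*x^2)))
        / (2 * (x*(2*x^2+2*x-1)/(1+4*x-2*x^2)))
      - (-(x*(2*x^2+2*x-1)/(1+4*x-2*x^2)) + 2 * (x*(2*x^2+2*x-1)/(1+4*x-2*x^2))^2)|
      ≤ 100 * |x*(2*x^2+2*x-1)/(1+4*x-2*x^2)|^3 ∧
    |x*(2*x^2+2*x-1)/(1+4*x-2*x^2) + x| ≤ 100 * x^2 ∧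
    |(Real.sqrt (1 + 4 * (x*(2*x^2+2*x-1)/(1+4*x-2*x^2))) - 1
        - 2 * (x*(2*x^2+2*x-1)/(1+4*x-2*x^2)))
        / (2 * (x*(2*x^2+2*x-1)/(1+4*x-2*x^2)))
      - x + 4 * x^2| ≤ 100 * x^3 := by
  have hD : (1:ℝ) ≤ 1+4*x-2*x^2 := by nlinarith
  have hD2 : 1+4*x-2*x^2 ≤ 3/2 := by nlinarith
  have hDpos : (0:ℝ) < 1+4*x-2*x^2 := by linarith
  set b := x*(2*x^2+2*x-1)/(1+4*x-2*x^2) with hbdef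
  have hN : 2*x^2+2*x-1 < 0 := by nlinarith
  have hb0 : b < 0 := div_neg_of_neg_of_pos (mul_neg_of_pos_of_neg h0 hN) hDpos
  have hblb : -x ≤ b := by
    rw [hbdef, le_div_iff₀ hDpos]
    nlinarith
  have hb : -(1/8) ≤ b := by linarith
  have habsb : |b| ≤ x := abs_le.mpr ⟨by linarith, by linarith⟩
  have hsq := sqrt_est b hb0 hb
  refine ⟨hsq.trans ?_, ?_, ?_⟩
  · have : (0:ℝ) ≤ |b|^3 := by positivity
    linarith
  · have h6 : b + x = 6*x^2/(1+4*x-2*x^2) := by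
      have e : b * (1+4*x-2*x^2) = x*(2*x^2+2*x-1) := by rw [hbdef]; exact div_mul_cancel₀ _ hDpos.ne'
      rw [eq_div_iff hDpos.ne']; linear_combination e
    rw [h6, abs_of_nonneg (by positivity)]
    calc 6*x^2/(1+4*x-2*x^2) ≤ 6*x^2/1 := by
          apply div_le_div_of_nonneg_left (by positivity) one_pos hD
    _ ≤ 100*x^2 := by nlinarith
  · have h7 : (-b + 2*b^2) - (x - 4*x^2)
        = (72*x^4 - 12*x^4*(1+4*x-2*x^2))/(1+4*x-2*x^2)^2 := by
      have e : b * (1+4*x-2*x^2) = x*(2*x^2+2*x-1) := by rw [hbdef]; exact div_mul_cancel₀ _ hDpos.ne'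
      rw [eq_div_iff (pow_ne_zero 2 hDpos.ne')]
      linear_combination (-(1+4*x-2*x^2) + 2*(b*(1+4*x-2*x^2) + x*(2*x^2+2*x-1))) * e
    have hx4 : (0:ℝ) ≤ x^4 := by positivity
    have hnum : (0:ℝ) ≤ 72*x^4 - 12*x^4*(1+4*x-2*x^2) := by
      nlinarith [mul_nonneg hx4 (by linarith : (0:ℝ) ≤ 3/2 - (1+4*x-2*x^2))]
    have h8 : |(-b + 2*b^2) - (x - 4*x^2)| ≤ 72*x^4 := by
      rw [h7, abs_div, abs_of_nonneg hnum,
        abs_of_nonneg (by positivity : (0:ℝ) ≤ (1+4*x-2*x^2)^2)]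
      have hstep : (72*x^4 - 12*x^4*(1+4*x-2*x^2))/(1+4*x-2*x^2)^2
          ≤ (72*x^4 - 12*x^4*(1+4*x-2*x^2))/1 :=
        div_le_div_of_nonneg_left hnum one_pos (by nlinarith)
      rw [div_one] at hstep
      refine hstep.trans ?_
      nlinarith [mul_nonneg hx4 hDpos.le]
    have hb3 : |b|^3 ≤ x^3 := pow_le_pow_left₀ (abs_nonneg b) habsb 3
    have htri : |(Real.sqrt (1+4*b) - 1 - 2*b)/(2*b) - x + 4*x^2|
        ≤ |(Real.sqrt (1+4*b) - 1 - 2*b)/(2*b) - (-b + 2*b^2)|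
          + |(-b + 2*b^2) - (x - 4*x^2)| := by
      have := abs_add_le ((Real.sqrt (1+4*b) - 1 - 2*b)/(2*b) - (-b + 2*b^2))
        ((-b + 2*b^2) - (x - 4*x^2))
      calc |(Real.sqrt (1+4*b) - 1 - 2*b)/(2*b) - x + 4*x^2|
          = |((Real.sqrt (1+4*b) - 1 - 2*b)/(2*b) - (-b + 2*b^2))
              + ((-b + 2*b^2) - (x - 4*x^2))| := by ring_nf
      _ ≤ _ := this
    have hx3 : (0:ℝ) ≤ x^3 := by positivity
    nlinarith [htri, hsq, h8, hb3, h1, hx3]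
set_option maxHeartbeats 1000000 in
/-- with β = φ''(2)/φ''(1), the root λ = (√(1+4β)-1-2β)/(2β) of the
characteristic equation satisfies λ = -β + 2β² + O(|β|³), β = -e^{-α} + O(e^{-2α}), and
hence λ = e^{-α} - 4e^{-2α} + O(e^{-3α}), as α → ∞. -/
theorem stmt_8 (φ₀ : ℝ) :
    ∃ C α₀ : ℝ, 0 < C ∧ 0 < α₀ ∧ ∀ α : ℝ, α₀ ≤ α →
      (deriv (deriv (morse α φ₀)) 2 < 0 ∧ 0 < deriv (deriv (morse α φ₀)) 1 ∧
        0 < deriv (deriv (morse α φ₀)) 1 + 4 * deriv (deriv (morse α φ₀)) 2) ∧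
      (let β : ℝ := deriv (deriv (morse α φ₀)) 2 / deriv (deriv (morse α φ₀)) 1;
       let lam : ℝ := (Real.sqrt (1 + 4 * β) - 1 - 2 * β) / (2 * β);
       |lam - (-β + 2 * β ^ 2)| ≤ C * |β| ^ 3 ∧
       |β + Real.exp (-α)| ≤ C * Real.exp (-2 * α) ∧
       |lam - Real.exp (-α) + 4 * Real.exp (-2 * α)| ≤ C * Real.exp (-3 * α)) := by
  refine ⟨100, 3, by norm_num, by norm_num, fun α hα => ?_⟩
  have hα0 : (0:ℝ) < α := by linarith
  set x := Real.exp (-α) with hxdef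
  have hx0 : 0 < x := Real.exp_pos _
  have hx2 : Real.exp (-2*α) = x^2 := by
    rw [hxdef, show (-2*α) = (-α) + (-α) by ring, Real.exp_add]; ring
  have hx3 : Real.exp (-3*α) = x^3 := by
    rw [hxdef, show (-3*α) = (-α) + ((-α) + (-α)) by ring, Real.exp_add, Real.exp_add]; ring
  have hx : x ≤ 1/8 := by
    have h2 : (2:ℝ) ≤ Real.exp 1 := by
      have := Real.add_one_le_exp (1:ℝ); linarith
    have h8 : (8:ℝ) ≤ Real.exp 3 := by
      have : Real.exp 3 = Real.exp 1 * Real.exp 1 * Real.exp 1 := by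
        rw [← Real.exp_add, ← Real.exp_add]; norm_num
      nlinarith
    have hle : Real.exp (-α) ≤ Real.exp (-3) := Real.exp_le_exp.mpr (by linarith)
    have : Real.exp (-3) = 1 / Real.exp 3 := by
      rw [Real.exp_neg]; exact inv_eq_one_div _
    rw [hxdef]
    calc Real.exp (-α) ≤ Real.exp (-3) := hle
    _ = 1 / Real.exp 3 := this
    _ ≤ 1/8 := by
        apply div_le_div_of_nonneg_left (by norm_num) (by norm_num) h8
  -- Q facts
  have hQden : (0:ℝ) < 1 + 2*x^2 := by positivity
  have hQnum : (0:ℝ) < 1 + 2*x := by positivity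
  have hQ1 : 1 ≤ (1 + 2*x)/(1 + 2*x^2) := by
    rw [le_div_iff₀ hQden]; nlinarith
  have hQub : (1 + 2*x)/(1 + 2*x^2) ≤ 5/4 := by
    rw [div_le_iff₀ hQden]; nlinarith
  set Q := (1 + 2*x)/(1 + 2*x^2) with hQdef
  have hQ0 : 0 < Q := lt_of_lt_of_le one_pos hQ1
  -- exponential values
  have hval : ∀ r : ℝ, Real.exp (-α*(r - morseR0 α)) = Real.exp (-α*(r-1)) * Q := by
    intro r
    rw [exp_val α hα0.ne' r, hx2, hQdef, hxdef]
  have e1 : Real.exp (-α*((1:ℝ) - morseR0 α)) = Q := by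
    rw [hval 1]; norm_num
  have e3 : Real.exp (-α*((2:ℝ) - morseR0 α)) = x*Q := by
    rw [hval 2, hxdef]; norm_num
  have esq : ∀ r : ℝ, Real.exp (-2*α*(r - morseR0 α)) = Real.exp (-α*(r - morseR0 α))^2 := by
    intro r
    rw [show -2*α*(r - morseR0 α) = (-α*(r - morseR0 α)) + (-α*(r - morseR0 α)) by ring,
      Real.exp_add]; ring
  have e2 : Real.exp (-2*α*((1:ℝ) - morseR0 α)) = Q^2 := by rw [esq 1, e1]
  have e4 : Real.exp (-2*α*((2:ℝ) - morseR0 α)) = (x*Q)^2 := by rw [esq 2, e3]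
  have hd1 : deriv (deriv (morse α φ₀)) 1 = 4*α^2*Q^2 - 2*α^2*Q := by
    rw [morse_deriv2, e2, e1]
  have hd2 : deriv (deriv (morse α φ₀)) 2 = 4*α^2*(x*Q)^2 - 2*α^2*(x*Q) := by
    rw [morse_deriv2, e4, e3]
  have hα2 : 0 < α^2 := by positivity
  -- signs
  have hA1 : 0 < deriv (deriv (morse α φ₀)) 1 := by
    rw [hd1]
    linarith [mul_pos (mul_pos (by positivity : (0:ℝ) < 2*α^2) hQ0)
      (by linarith : (0:ℝ) < 2*Q - 1)]
  have hA2 : deriv (deriv (morse α φ₀)) 2 < 0 := by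
    rw [hd2]
    have hxQ : 2*(x*Q) < 1 := by nlinarith
    linarith [mul_pos (mul_pos (by positivity : (0:ℝ) < 2*α^2) (mul_pos hx0 hQ0))
      (by linarith : (0:ℝ) < 1 - 2*(x*Q))]
  have hA14 : 0 < deriv (deriv (morse α φ₀)) 1 + 4 * deriv (deriv (morse α φ₀)) 2 := by
    rw [hd1, hd2]
    have hin : 0 < 2*Q - 1 + 4*x*(2*x*Q - 1) := by
      nlinarith [mul_nonneg (mul_nonneg hx0.le hx0.le) hQ0.le]
    linarith [mul_pos (mul_pos (by positivity : (0:ℝ) < 2*α^2) hQ0) hin]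
  refine ⟨⟨hA2, hA1, hA14⟩, ?_⟩
  have hDpos : (0:ℝ) < 1+4*x-2*x^2 := by nlinarith
  have hβ : deriv (deriv (morse α φ₀)) 2 / deriv (deriv (morse α φ₀)) 1
      = x*(2*x^2+2*x-1)/(1+4*x-2*x^2) := by
    have hA1' : (0:ℝ) < 4*α^2*Q^2 - 2*α^2*Q := hd1 ▸ hA1
    rw [hd2, hd1, div_eq_div_iff hA1'.ne' hDpos.ne', hQdef]
    field_simp
    ring
  have := est_all x hx0 hx
  simp only [hβ, hx2, hx3]
  exact this
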